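/- (Bernstein inequality on the torus) If b is a trigonometric polynomial of degree at most N, then ‖b'‖_∞ ≤ N‖b‖_∞. -/

import Mathlib

open Real Complex Finset

lemma hd_term (n : ℤ) (x : ℝ) :
    HasDerivAt (fun t : ℝ => Complex.exp (Complex.I * n * t))
      (Complex.I * n * Complex.exp (Complex.I * n * x)) x := by
  have h1 : HasDerivAt (fun t : ℝ => (t : ℂ)) 1 x := by
    simpa using (hasDerivAt_id x).ofReal_comp
  have h2 := (h1.const_mul (Complex.I * n)).cexp
  simpa [mul_comm] using h2

lemma hd_sum (N : ℕ) (c : ℤ → ℂ) (x : ℝ) :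
    HasDerivAt (fun t : ℝ => ∑ n ∈ Finset.Icc (-(N : ℤ)) (N : ℤ),
        c n * Complex.exp (Complex.I * n * t))
      (∑ n ∈ Finset.Icc (-(N : ℤ)) (N : ℤ),
        c n * (Complex.I * n * Complex.exp (Complex.I * n * x))) x := by
  apply HasDerivAt.fun_sum
  intro n _
  exact (hd_term n x).const_mul (c n)

noncomputable def th (N k : ℕ) : ℝ := (2*k+1) * π / (2*N)

lemma exp_th (N : ℕ) (hN : 0 < N) (j : ℤ) (k : ℕ) :
    Complex.exp (Complex.I * j * th N k)
      = Complex.exp (Complex.I * j * (π/(2*N))) * (Complex.exp (Complex.I * j * (π/N)))^k := by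
  rw [← Complex.exp_nat_mul, ← Complex.exp_add]
  congr 1
  have hN' : (N:ℂ) ≠ 0 := Nat.cast_ne_zero.2 hN.ne'
  push_cast [th]
  field_simp
  ring

lemma geo (N : ℕ) (hN : 0 < N) (j : ℤ) (hj : j.natAbs ≤ 2*N) :
    ∑ k ∈ Finset.range (2*N), Complex.exp (Complex.I * j * th N k)
      = if j = 0 then (2*N:ℂ) else if j.natAbs = 2*N then -(2*N:ℂ) else 0 := by
  have hN' : (N:ℂ) ≠ 0 := Nat.cast_ne_zero.2 hN.ne'
  have hπ : (π:ℂ) ≠ 0 := Complex.ofReal_ne_zero.2 Real.pi_ne_zero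
  simp only [exp_th N hN j, ← Finset.mul_sum]
  by_cases h0 : j = 0
  · simp [h0]
  by_cases h2 : j.natAbs = 2*N
  · -- j = ±2N
    have hu : Complex.exp (Complex.I * j * (π/(2*N))) = -1 := by
      rcases Int.natAbs_eq j with h | h
      · have : (Complex.I * j * (π/(2*N)) : ℂ) = π * Complex.I := by
          rw [h]; push_cast [h2]; field_simp
        rw [this, Complex.exp_pi_mul_I]
      · have : (Complex.I * j * (π/(2*N)) : ℂ) = -(π * Complex.I) := by
          rw [h]; push_cast [h2]; field_simp
        rw [this, Complex.exp_neg, Complex.exp_pi_mul_I]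
        norm_num
    have hr : Complex.exp (Complex.I * j * (π/N)) = 1 := by
      have h2w : (Complex.I * j * (π/N) : ℂ)
          = (Complex.I * j * (π/(2*N))) + (Complex.I * j * (π/(2*N))) := by
        field_simp; ring
      rw [h2w, Complex.exp_add, hu]
      norm_num
    rw [if_neg h0, if_pos h2, hu, hr]
    simp
  · have hr1 : Complex.exp (Complex.I * j * (π/N)) ≠ 1 := by
      intro h
      rw [Complex.exp_eq_one_iff] at h
      obtain ⟨n, hn⟩ := h
      have hj' : (j : ℂ) * π = 2*n*N*π := by
        field_simp at hn
        linear_combination (π:ℂ) * hn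
      have hj2 : (j : ℂ) = 2*n*N := mul_right_cancel₀ hπ hj'
      have hj3 : j = 2*n*N := by exact_mod_cast hj2
      rcases eq_or_ne n 0 with rfl | hn0
      · simp at hj3; omega
      · have h1 : 1 ≤ |n| := Int.one_le_abs hn0
        have habs : |j| = 2 * |n| * (N:ℤ) := by
          rw [hj3, abs_mul, abs_mul]
          simp
        have h2N : (2*(N:ℤ)) ≤ |j| := by
          have hN0 : (0:ℤ) ≤ N := Int.ofNat_nonneg N
          nlinarith
        rw [Int.abs_eq_natAbs] at h2N
        omega
    have hgeom : ∑ k ∈ Finset.range (2*N), (Complex.exp (Complex.I * j * (π/N)))^k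
        = ((Complex.exp (Complex.I * j * (π/N)))^(2*N) - 1)/(Complex.exp (Complex.I * j * (π/N)) - 1) :=
      geom_sum_eq hr1 _
    have hpow : (Complex.exp (Complex.I * j * (π/N)))^(2*N) = 1 := by
      rw [← Complex.exp_nat_mul, Complex.exp_eq_one_iff]
      refine ⟨j, ?_⟩
      push_cast
      field_simp
    rw [if_neg h0, if_neg h2, hgeom, hpow]
    simp

noncomputable def wa (N : ℕ) (m : ℤ) : ℂ :=
  (if m.natAbs < N then 1 else if m.natAbs = N then 1/2 else 0) * (Complex.I * m)

noncomputable def lam (N : ℕ) (k : ℕ) : ℂ :=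
  (1/(2*N)) * ∑ m ∈ Finset.Icc (-(N:ℤ)) (N:ℤ), wa N m * Complex.exp (-(Complex.I * m * th N k))

lemma dft (N : ℕ) (hN : 0 < N) (n : ℤ) (hn : n.natAbs ≤ N) :
    ∑ k ∈ Finset.range (2*N), lam N k * Complex.exp (Complex.I * n * th N k)
      = Complex.I * n := by
  have hN2 : (2*(N:ℂ)) ≠ 0 := by
    simp [Nat.cast_ne_zero.2 hN.ne']
  have key : ∀ k ∈ Finset.range (2*N), lam N k * Complex.exp (Complex.I * n * th N k)
      = ∑ m ∈ Finset.Icc (-(N:ℤ)) (N:ℤ),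
          (1/(2*(N:ℂ))) * (wa N m * Complex.exp (Complex.I * ((n - m : ℤ) : ℂ) * th N k)) := by
    intro k _
    unfold lam
    rw [mul_assoc, Finset.sum_mul, Finset.mul_sum]
    refine Finset.sum_congr rfl fun m _ => ?_
    have he : Complex.exp (-(Complex.I * m * th N k)) * Complex.exp (Complex.I * n * th N k)
        = Complex.exp (Complex.I * ((n - m : ℤ) : ℂ) * th N k) := by
      rw [← Complex.exp_add]
      congr 1
      push_cast
      ring
    rw [mul_assoc (wa N m), he]
  rw [Finset.sum_congr rfl key, Finset.sum_comm]
  have inner : ∀ m ∈ Finset.Icc (-(N:ℤ)) (N:ℤ),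
      ∑ k ∈ Finset.range (2*N), (1/(2*(N:ℂ))) * (wa N m * Complex.exp (Complex.I * ((n - m : ℤ) : ℂ) * th N k))
      = (1/(2*(N:ℂ))) * (wa N m *
          (if n - m = 0 then (2*N:ℂ) else if (n-m).natAbs = 2*N then -(2*N:ℂ) else 0)) := by
    intro m hm
    rw [← Finset.mul_sum, ← Finset.mul_sum, geo N hN (n-m)]
    simp only [Finset.mem_Icc] at hm
    omega
  rw [Finset.sum_congr rfl inner]
  have hmem : (n : ℤ) ∈ Finset.Icc (-(N:ℤ)) (N:ℤ)  := by
    simp only [Finset.mem_Icc]; omega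
  by_cases hNn : n.natAbs = N
  · have hn0 : n ≠ 0 := by omega
    have hmem' : (-n : ℤ) ∈ (Finset.Icc (-(N:ℤ)) (N:ℤ)).erase n := by
      simp only [Finset.mem_erase, Finset.mem_Icc]
      refine ⟨by omega, by omega, by omega⟩
    rw [← Finset.add_sum_erase _ _ hmem, ← Finset.add_sum_erase _ _ hmem']
    have hz : ∑ m ∈ ((Finset.Icc (-(N:ℤ)) (N:ℤ)).erase n).erase (-n),
        (1/(2*(N:ℂ))) * (wa N m *
          (if n - m = 0 then (2*N:ℂ) else if (n-m).natAbs = 2*N then -(2*N:ℂ) else 0)) = 0 := by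
      refine Finset.sum_eq_zero fun m hm => ?_
      simp only [Finset.mem_erase, Finset.mem_Icc] at hm
      have h1 : ¬ (n - m = 0) := by omega
      have h2 : ¬ ((n-m).natAbs = 2*N) := by omega
      rw [if_neg h1, if_neg h2]
      simp
    rw [hz, add_zero]
    rw [if_pos (by ring : n - n = 0), if_neg (by omega : ¬ (n - (-n)) = 0),
      if_pos (by omega : (n - (-n)).natAbs = 2*N)]
    simp only [wa, hNn, Int.natAbs_neg]
    norm_num
    push_cast
    field_simp
    rw [mul_div_cancel_left₀ _ (Nat.cast_ne_zero.2 hN.ne' : (N:ℂ) ≠ 0)]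
    ring
  · rw [← Finset.add_sum_erase _ _ hmem]
    have hz : ∑ m ∈ (Finset.Icc (-(N:ℤ)) (N:ℤ)).erase n,
        (1/(2*(N:ℂ))) * (wa N m *
          (if n - m = 0 then (2*N:ℂ) else if (n-m).natAbs = 2*N then -(2*N:ℂ) else 0)) = 0 := by
      refine Finset.sum_eq_zero fun m hm => ?_
      simp only [Finset.mem_erase, Finset.mem_Icc] at hm
      have h1 : ¬ (n - m = 0) := by omega
      have h2 : ¬ ((n-m).natAbs = 2*N) := by omega
      rw [if_neg h1, if_neg h2]
      simp
    rw [hz, add_zero]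
    rw [if_pos (by ring : n - n = 0)]
    simp only [wa]
    rw [if_pos (by omega : n.natAbs < N)]
    field_simp
    rw [mul_div_cancel_left₀ _ (Nat.cast_ne_zero.2 hN.ne' : (N:ℂ) ≠ 0)]

lemma wa_lt {N : ℕ} {m : ℤ} (h : m.natAbs < N) : wa N m = Complex.I * m := by
  simp [wa, h]

lemma wa_eq {N : ℕ} {m : ℤ} (h : m.natAbs = N) : wa N m = Complex.I * m / 2 := by
  rw [wa, if_neg (by omega), if_pos h]
  ring

lemma wa_gt {N : ℕ} {m : ℤ} (h : N < m.natAbs) : wa N m = 0 := by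
  rw [wa, if_neg (by omega), if_neg (by omega)]
  ring

noncomputable def Rp (N : ℕ) (m : ℤ) : ℂ :=
  if m = (N:ℤ)-1 then Complex.I*N/4 else if m = (N:ℤ) then Complex.I/2
    else if m = (N:ℤ)+1 then -(Complex.I*N)/4 else 0

noncomputable def Rm (N : ℕ) (m : ℤ) : ℂ :=
  if m = -((N:ℤ)-1) then -(Complex.I*N)/4 else if m = -(N:ℤ) then -(Complex.I/2)
    else if m = -((N:ℤ)+1) then Complex.I*N/4 else 0

lemma hT (N : ℕ) (hN : 0 < N) (m : ℤ) :
    wa N m - (wa N (m-1) + wa N (m+1))/2 = Rp N m + Rm N m := by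
  have hN1 : (1:ℤ) ≤ (N:ℤ) := by exact_mod_cast hN
  by_cases h1 : m = (N:ℤ)-1
  · by_cases hd1 : m = -((N:ℤ)-1)
    · -- N = 1, m = 0
      have hNe : (N:ℤ) = 1 := by omega
      have hm : m = 0 := by omega
      subst hm
      rw [wa_lt (by omega), wa_eq (by omega), wa_eq (by omega)]
      rw [Rp, Rm, if_pos (by omega), if_pos (by omega)]
      push_cast
      ring
    · have hN2 : (2:ℤ) ≤ (N:ℤ) := by omega
      subst h1
      rw [wa_lt (by omega), wa_lt (by omega), wa_eq (by omega)]
      rw [Rp, Rm, if_pos rfl, if_neg (by omega), if_neg (by omega), if_neg (by omega)]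
      push_cast
      ring
  · by_cases h2 : m = (N:ℤ)
    · subst h2
      rw [wa_eq (by omega), wa_lt (by omega), wa_gt (by omega)]
      rw [Rp, Rm, if_neg (by omega), if_pos rfl, if_neg (by omega), if_neg (by omega),
        if_neg (by omega)]
      push_cast
      ring
    · by_cases h3 : m = (N:ℤ)+1
      · subst h3
        rw [wa_gt (by omega), wa_eq (by omega), wa_gt (by omega)]
        rw [Rp, Rm, if_neg (by omega), if_neg (by omega), if_pos rfl, if_neg (by omega),
          if_neg (by omega), if_neg (by omega)]
        push_cast
        ring
      · by_cases h4 : m = -((N:ℤ)-1)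
        · have hN2 : (2:ℤ) ≤ (N:ℤ) := by omega
          subst h4
          rw [wa_lt (by omega), wa_eq (by omega), wa_lt (by omega)]
          rw [Rp, Rm, if_neg (by omega), if_neg (by omega), if_neg (by omega), if_pos rfl]
          push_cast
          ring
        · by_cases h5 : m = -(N:ℤ)
          · subst h5
            rw [wa_eq (by omega), wa_gt (by omega), wa_lt (by omega)]
            rw [Rp, Rm, if_neg (by omega), if_neg (by omega), if_neg (by omega),
              if_neg (by omega), if_pos rfl]
            push_cast
            ring
          · by_cases h6 : m = -((N:ℤ)+1)
            · subst h6
              rw [wa_gt (by omega), wa_gt (by omega), wa_eq (by omega)]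
              rw [Rp, Rm, if_neg (by omega), if_neg (by omega), if_neg (by omega),
                if_neg (by omega), if_neg (by omega), if_pos rfl]
              push_cast
              ring
            · rw [Rp, Rm, if_neg h1, if_neg h2, if_neg h3, if_neg h4, if_neg h5, if_neg h6]
              by_cases hsmall : m.natAbs + 2 ≤ N
              · rw [wa_lt (by omega), wa_lt (by omega), wa_lt (by omega)]
                push_cast
                ring
              · rw [wa_gt (by omega), wa_gt (by omega), wa_gt (by omega)]
                ring

lemma wa_gt' {N : ℕ} {m : ℤ} (h : N < m.natAbs) : wa N m = 0 := by
  rw [wa, if_neg (by omega), if_neg (by omega)]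
  ring

lemma zpow_exp (N k : ℕ) (m : ℤ) :
    Complex.exp (-(Complex.I * m * th N k)) = (Complex.exp (-(Complex.I * th N k)))^m := by
  rw [← Complex.exp_int_mul]
  congr 1
  push_cast
  ring

lemma sum_wa_ext (N : ℕ) (z : ℂ) {A B : ℤ} (hA : A ≤ -(N:ℤ)) (hB : (N:ℤ) ≤ B) :
    ∑ m ∈ Finset.Icc A B, wa N m * z^m
      = ∑ m ∈ Finset.Icc (-(N:ℤ)) (N:ℤ), wa N m * z^m := by
  symm
  apply Finset.sum_subset (Finset.Icc_subset_Icc hA hB)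
  intro m hm hnm
  simp only [Finset.mem_Icc] at hm hnm
  rw [wa_gt' (by omega), zero_mul]

lemma sum_shift (f : ℤ → ℂ) (A B d : ℤ) :
    ∑ m ∈ Finset.Icc A B, f (m + d) = ∑ m ∈ Finset.Icc (A+d) (B+d), f m := by
  rw [← Finset.map_add_right_Icc, Finset.sum_map]
  simp

lemma key_prod (N : ℕ) (hN : 0 < N) (z : ℂ) (hz : z ≠ 0) :
    (∑ m ∈ Finset.Icc (-(N:ℤ)) (N:ℤ), wa N m * z^m) * (1 - (z + z⁻¹)/2)
      = ∑ m ∈ Finset.Icc (-((N:ℤ)+1)) ((N:ℤ)+1), (Rp N m + Rm N m) * z^m := by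
  have h0 : ∑ m ∈ Finset.Icc (-((N:ℤ)+1)) ((N:ℤ)+1), wa N m * z^m
      = ∑ m ∈ Finset.Icc (-(N:ℤ)) (N:ℤ), wa N m * z^m :=
    sum_wa_ext N z (by omega) (by omega)
  have h1 : ∑ m ∈ Finset.Icc (-((N:ℤ)+1)) ((N:ℤ)+1), wa N (m-1) * z^m
      = z * ∑ m ∈ Finset.Icc (-(N:ℤ)) (N:ℤ), wa N m * z^m := by
    have hs := sum_shift (fun m => wa N (m-1) * z^m) (-((N:ℤ)+2)) ((N:ℤ)) 1
    simp only [add_sub_cancel_right] at hs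
    have he : (-((N:ℤ)+2) + 1) = -((N:ℤ)+1) := by ring
    have he2 : ((N:ℤ) + 1) = (N:ℤ) + 1 := rfl
    rw [he] at hs
    rw [← hs]
    rw [← sum_wa_ext N z (by omega : (-((N:ℤ)+2)) ≤ -(N:ℤ)) (by omega : (N:ℤ) ≤ (N:ℤ)),
      Finset.mul_sum]
    refine Finset.sum_congr rfl fun m _ => ?_
    rw [zpow_add₀ hz m 1, zpow_one]
    ring
  have h2 : ∑ m ∈ Finset.Icc (-((N:ℤ)+1)) ((N:ℤ)+1), wa N (m+1) * z^m
      = z⁻¹ * ∑ m ∈ Finset.Icc (-(N:ℤ)) (N:ℤ), wa N m * z^m := by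
    have hs := sum_shift (fun m => wa N (m+1) * z^m) (-(N:ℤ)) ((N:ℤ)+2) (-1)
    simp only [neg_add_cancel_right] at hs
    have he : ((N:ℤ)+2 + -1) = (N:ℤ)+1 := by ring
    have he2 : (-(N:ℤ) + -1) = -((N:ℤ)+1) := by ring
    rw [he, he2] at hs
    rw [← hs]
    rw [← sum_wa_ext N z (by omega : (-(N:ℤ)) ≤ -(N:ℤ)) (by omega : (N:ℤ) ≤ (N:ℤ)+2),
      Finset.mul_sum]
    refine Finset.sum_congr rfl fun m _ => ?_
    have : z ^ (m + -1) = z^m * z⁻¹ := by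
      rw [zpow_add₀ hz m (-1), zpow_neg, zpow_one]
    rw [this]
    ring
  have hTsum : ∑ m ∈ Finset.Icc (-((N:ℤ)+1)) ((N:ℤ)+1), (Rp N m + Rm N m) * z^m
      = ∑ m ∈ Finset.Icc (-((N:ℤ)+1)) ((N:ℤ)+1),
          (wa N m - (wa N (m-1) + wa N (m+1))/2) * z^m := by
    refine Finset.sum_congr rfl fun m _ => ?_
    rw [hT N hN m]
  rw [hTsum]
  have expand : ∑ m ∈ Finset.Icc (-((N:ℤ)+1)) ((N:ℤ)+1),
      (wa N m - (wa N (m-1) + wa N (m+1))/2) * z^m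
      = (∑ m ∈ Finset.Icc (-((N:ℤ)+1)) ((N:ℤ)+1), wa N m * z^m)
        - ((∑ m ∈ Finset.Icc (-((N:ℤ)+1)) ((N:ℤ)+1), wa N (m-1) * z^m)
          + (∑ m ∈ Finset.Icc (-((N:ℤ)+1)) ((N:ℤ)+1), wa N (m+1) * z^m))/2 := by
    rw [← Finset.sum_add_distrib, Finset.sum_div, ← Finset.sum_sub_distrib]
    refine Finset.sum_congr rfl fun m _ => ?_
    ring
  rw [expand, h0, h1, h2]
  ring

lemma sum_R (N : ℕ) (hN : 0 < N) (z : ℂ) :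
    ∑ m ∈ Finset.Icc (-((N:ℤ)+1)) ((N:ℤ)+1), (Rp N m + Rm N m) * z^m
      = Complex.I*N/4 * z^((N:ℤ)-1) + Complex.I/2 * z^((N:ℤ)) + -(Complex.I*N)/4 * z^((N:ℤ)+1)
        + -(Complex.I*N)/4 * z^(-((N:ℤ)-1)) + -(Complex.I/2) * z^(-(N:ℤ))
        + Complex.I*N/4 * z^(-((N:ℤ)+1)) := by
  have hN1 : (1:ℤ) ≤ (N:ℤ) := by exact_mod_cast hN
  have hRp : ∀ m : ℤ, Rp N m
      = (if m = (N:ℤ)-1 then Complex.I*N/4 else 0) + (if m = (N:ℤ) then Complex.I/2 else 0)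
        + (if m = (N:ℤ)+1 then -(Complex.I*N)/4 else 0) := by
    intro m
    rw [Rp]
    split_ifs <;> first | omega | ring
  have hRm : ∀ m : ℤ, Rm N m
      = (if m = -((N:ℤ)-1) then -(Complex.I*N)/4 else 0) + (if m = -(N:ℤ) then -(Complex.I/2) else 0)
        + (if m = -((N:ℤ)+1) then Complex.I*N/4 else 0) := by
    intro m
    rw [Rm]
    split_ifs <;> first | omega | ring
  have step : ∀ (a : ℤ) (v : ℂ), a ∈ Finset.Icc (-((N:ℤ)+1)) ((N:ℤ)+1) →
      ∑ m ∈ Finset.Icc (-((N:ℤ)+1)) ((N:ℤ)+1), (if m = a then v else 0) * z^m = v * z^a := by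
    intro a v ha
    have hpt : ∀ m ∈ Finset.Icc (-((N:ℤ)+1)) ((N:ℤ)+1),
        (if m = a then v else 0) * z^m = if m = a then v * z^m else 0 := by
      intro m _
      split_ifs <;> simp
    rw [Finset.sum_congr rfl hpt, Finset.sum_ite_eq' _ a (fun m => v * z^m), if_pos ha]
  have split6 : ∑ m ∈ Finset.Icc (-((N:ℤ)+1)) ((N:ℤ)+1), (Rp N m + Rm N m) * z^m
      = (∑ m ∈ Finset.Icc (-((N:ℤ)+1)) ((N:ℤ)+1), (if m = (N:ℤ)-1 then Complex.I*N/4 else 0) * z^m)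
      + (∑ m ∈ Finset.Icc (-((N:ℤ)+1)) ((N:ℤ)+1), (if m = (N:ℤ) then Complex.I/2 else 0) * z^m)
      + (∑ m ∈ Finset.Icc (-((N:ℤ)+1)) ((N:ℤ)+1), (if m = (N:ℤ)+1 then -(Complex.I*N)/4 else 0) * z^m)
      + (∑ m ∈ Finset.Icc (-((N:ℤ)+1)) ((N:ℤ)+1), (if m = -((N:ℤ)-1) then -(Complex.I*N)/4 else 0) * z^m)
      + (∑ m ∈ Finset.Icc (-((N:ℤ)+1)) ((N:ℤ)+1), (if m = -(N:ℤ) then -(Complex.I/2) else 0) * z^m)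
      + (∑ m ∈ Finset.Icc (-((N:ℤ)+1)) ((N:ℤ)+1), (if m = -((N:ℤ)+1) then Complex.I*N/4 else 0) * z^m) := by
    rw [← Finset.sum_add_distrib, ← Finset.sum_add_distrib, ← Finset.sum_add_distrib,
      ← Finset.sum_add_distrib, ← Finset.sum_add_distrib]
    refine Finset.sum_congr rfl fun m _ => ?_
    rw [hRp, hRm]
    ring
  rw [split6, step _ _ (by simp only [Finset.mem_Icc]; omega),
    step _ _ (by simp only [Finset.mem_Icc]; omega),
    step _ _ (by simp only [Finset.mem_Icc]; omega),
    step _ _ (by simp only [Finset.mem_Icc]; omega),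
    step _ _ (by simp only [Finset.mem_Icc]; omega),
    step _ _ (by simp only [Finset.mem_Icc]; omega)]

lemma expN (N : ℕ) (hN : 0 < N) (k : ℕ) :
    Complex.exp (Complex.I * N * th N k) = Complex.I * (-1:ℂ)^k := by
  have hNc : (N:ℂ) ≠ 0 := Nat.cast_ne_zero.2 hN.ne'
  have harg : (Complex.I * N * (th N k : ℝ) : ℂ) = ((2*k+1 : ℕ) : ℂ) * (((π/2 : ℝ) : ℂ) * Complex.I) := by
    push_cast [th]
    field_simp
  rw [harg, Complex.exp_nat_mul]
  have hpi2 : Complex.exp (((π/2 : ℝ) : ℂ) * Complex.I) = Complex.I := by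
    rw [Complex.exp_mul_I, ← Complex.ofReal_cos, ← Complex.ofReal_sin,
      Real.cos_pi_div_two, Real.sin_pi_div_two]
    simp
  rw [hpi2, pow_succ, pow_mul, Complex.I_sq]
  ring

lemma neg_one_pow_sq (k : ℕ) : ((-1:ℂ)^k)^2 = 1 := by
  rw [← pow_mul, mul_comm, pow_mul]
  norm_num

lemma lam_formula (N : ℕ) (hN : 0 < N) (k : ℕ) :
    (2*(N:ℂ)) * lam N k * (1 - ((Real.cos (th N k) : ℝ) : ℂ)) = (-1:ℂ)^k := by
  have hNc : (N:ℂ) ≠ 0 := Nat.cast_ne_zero.2 hN.ne'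
  have hN2 : (2*(N:ℂ)) ≠ 0 := by simp [hNc]
  set z := Complex.exp (-(Complex.I * th N k)) with hzdef
  have hz : z ≠ 0 := Complex.exp_ne_zero _
  have hε : ((-1:ℂ)^k)^2 = 1 := neg_one_pow_sq k
  have hS : lam N k = (1/(2*(N:ℂ))) * ∑ m ∈ Finset.Icc (-(N:ℤ)) (N:ℤ), wa N m * z^m := by
    rw [lam]
    congr 1
    refine Finset.sum_congr rfl fun m _ => ?_
    rw [zpow_exp]
  have e1 : z = Complex.exp (-((th N k : ℝ) : ℂ) * Complex.I) := by
    rw [hzdef]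
    congr 1
    ring
  have e2 : z⁻¹ = Complex.exp (((th N k : ℝ) : ℂ) * Complex.I) := by
    rw [e1, ← Complex.exp_neg]
    congr 1
    ring
  have hcos : ((Real.cos (th N k) : ℝ) : ℂ) = (z + z⁻¹)/2 := by
    rw [Complex.ofReal_cos, Complex.cos, ← e2, ← e1]
    ring
  have hw : z ^ ((N:ℤ)) = -(Complex.I * (-1:ℂ)^k) := by
    have h1 : z ^ ((N:ℤ)) = Complex.exp (-(Complex.I * ((N:ℤ) : ℂ) * th N k)) :=
      (zpow_exp N k (N:ℤ)).symm
    have h2 : (-(Complex.I * ((N:ℤ) : ℂ) * th N k)) = -(Complex.I * (N:ℕ) * th N k) := by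
      push_cast
      ring
    rw [h1, h2, Complex.exp_neg, expN N hN k]
    have hmul : (Complex.I * (-1:ℂ)^k) * (-(Complex.I * (-1:ℂ)^k)) = 1 := by
      linear_combination (-(((-1:ℂ)^k)^2)) * Complex.I_sq + hε
    exact inv_eq_of_mul_eq_one_right hmul
  have hwinv : z ^ (-(N:ℤ)) = Complex.I * (-1:ℂ)^k := by
    rw [zpow_neg, hw]
    have hmul : (-(Complex.I * (-1:ℂ)^k)) * (Complex.I * (-1:ℂ)^k) = 1 := by
      linear_combination (-(((-1:ℂ)^k)^2)) * Complex.I_sq + hε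
    exact inv_eq_of_mul_eq_one_right hmul
  rw [hS, hcos]
  have e3 : z^((N:ℤ)-1) = z^((N:ℤ)) * z⁻¹ := by
    rw [zpow_sub₀ hz, zpow_one, div_eq_mul_inv]
  have e4 : z^((N:ℤ)+1) = z^((N:ℤ)) * z := by
    rw [zpow_add₀ hz, zpow_one]
  have e5 : z^(-((N:ℤ)-1)) = z^(-(N:ℤ)) * z := by
    rw [(by ring : -((N:ℤ)-1) = -(N:ℤ) + 1), zpow_add₀ hz, zpow_one]
  have e6 : z^(-((N:ℤ)+1)) = z^(-(N:ℤ)) * z⁻¹ := by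
    rw [(by ring : -((N:ℤ)+1) = -(N:ℤ) + (-1)), zpow_add₀ hz]
    norm_num
  calc (2*(N:ℂ)) * ((1/(2*(N:ℂ))) * ∑ m ∈ Finset.Icc (-(N:ℤ)) (N:ℤ), wa N m * z^m)
        * (1 - (z + z⁻¹)/2)
      = (∑ m ∈ Finset.Icc (-(N:ℤ)) (N:ℤ), wa N m * z^m) * (1 - (z + z⁻¹)/2) := by
        field_simp
    _ = ∑ m ∈ Finset.Icc (-((N:ℤ)+1)) ((N:ℤ)+1), (Rp N m + Rm N m) * z^m :=
        key_prod N hN z hz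
    _ = Complex.I*N/4 * z^((N:ℤ)-1) + Complex.I/2 * z^((N:ℤ)) + -(Complex.I*N)/4 * z^((N:ℤ)+1)
        + -(Complex.I*N)/4 * z^(-((N:ℤ)-1)) + -(Complex.I/2) * z^(-(N:ℤ))
        + Complex.I*N/4 * z^(-((N:ℤ)+1)) := sum_R N hN z
    _ = (-1:ℂ)^k := by
        rw [e3, e4, e5, e6, hw, hwinv]
        linear_combination (-((-1:ℂ)^k)) * Complex.I_sq

lemma neg_one_pow_sq' (k : ℕ) : ((-1:ℝ)^k)^2 = 1 := by
  rw [← pow_mul, mul_comm, pow_mul]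
  norm_num

lemma cos_pos (N : ℕ) (hN : 0 < N) (k : ℕ) : 0 < 1 - Real.cos (th N k) := by
  rcases (sub_nonneg.2 (Real.cos_le_one (th N k))).lt_or_eq with h | h
  · exact h
  · exfalso
    have hC : (1 - ((Real.cos (th N k) : ℝ) : ℂ)) = ((1 - Real.cos (th N k) : ℝ) : ℂ) := by
      push_cast
      ring
    have hz : ((-1:ℂ)^k) = 0 := by
      rw [← lam_formula N hN k, hC, ← h]
      simp
    exact pow_ne_zero _ (by norm_num : (-1:ℂ) ≠ 0) hz

noncomputable def rr (N : ℕ) (k : ℕ) : ℝ := (-1:ℝ)^k / (2*N*(1 - Real.cos (th N k)))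

lemma lam_val (N : ℕ) (hN : 0 < N) (k : ℕ) : lam N k = ((rr N k : ℝ) : ℂ) := by
  have hcp := cos_pos N hN k
  have hNr : (0:ℝ) < N := by exact_mod_cast hN
  have hDr : (2*(N:ℝ)*(1 - Real.cos (th N k))) ≠ 0 := by positivity
  have hD : (((2*(N:ℝ)*(1 - Real.cos (th N k))) : ℝ) : ℂ) ≠ 0 := Complex.ofReal_ne_zero.2 hDr
  apply mul_left_cancel₀ hD
  have lhs : (((2*(N:ℝ)*(1 - Real.cos (th N k))) : ℝ) : ℂ) * lam N k = (-1:ℂ)^k := by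
    rw [← lam_formula N hN k]
    push_cast
    ring
  have hr : (2*(N:ℝ)*(1 - Real.cos (th N k))) * rr N k = (-1:ℝ)^k := by
    rw [rr]
    field_simp
  have rhs : (((2*(N:ℝ)*(1 - Real.cos (th N k))) : ℝ) : ℂ) * ((rr N k : ℝ) : ℂ) = (-1:ℂ)^k := by
    rw [← Complex.ofReal_mul, hr]
    push_cast
    ring
  rw [lhs, rhs]

lemma lam_norm (N : ℕ) (hN : 0 < N) (k : ℕ) : ‖lam N k‖ = (-1:ℝ)^k * rr N k := by
  have hcp := cos_pos N hN k
  have hNr : (0:ℝ) < N := by exact_mod_cast hN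
  have hDpos : (0:ℝ) < 2*(N:ℝ)*(1 - Real.cos (th N k)) := by positivity
  have hval : (-1:ℝ)^k * rr N k = 1 / (2*(N:ℝ)*(1 - Real.cos (th N k))) := by
    rw [rr, ← mul_div_assoc, ← pow_two, neg_one_pow_sq']
  rw [lam_val N hN k, Complex.norm_real, Real.norm_eq_abs, hval, rr, abs_div,
    abs_of_pos hDpos]
  norm_num [abs_pow]

lemma sum_norm (N : ℕ) (hN : 0 < N) :
    ∑ k ∈ Finset.range (2*N), ‖lam N k‖ = N := by
  have hdft := dft N hN (N:ℤ) (by simp)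
  have hre : ∀ k ∈ Finset.range (2*N),
      lam N k * Complex.exp (Complex.I * ((N:ℤ) : ℂ) * th N k)
        = lam N k * (Complex.I * (-1:ℂ)^k) := by
    intro k _
    congr 1
    rw [← expN N hN k]
    congr 2
  rw [Finset.sum_congr rfl hre] at hdft
  have h2 : Complex.I * ∑ k ∈ Finset.range (2*N), lam N k * (-1:ℂ)^k
      = Complex.I * ((N:ℤ) : ℂ) := by
    rw [Finset.mul_sum, ← hdft]
    refine Finset.sum_congr rfl fun k _ => ?_
    ring
  have h3 : ∑ k ∈ Finset.range (2*N), lam N k * (-1:ℂ)^k = ((N:ℤ) : ℂ) :=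
    mul_left_cancel₀ Complex.I_ne_zero h2
  have h4 : ((∑ k ∈ Finset.range (2*N), ‖lam N k‖ : ℝ) : ℂ) = ((N:ℝ) : ℂ) := by
    calc ((∑ k ∈ Finset.range (2*N), ‖lam N k‖ : ℝ) : ℂ)
        = ∑ k ∈ Finset.range (2*N), ((‖lam N k‖ : ℝ) : ℂ) := by push_cast; rfl
      _ = ∑ k ∈ Finset.range (2*N), lam N k * (-1:ℂ)^k := by
          refine Finset.sum_congr rfl fun k _ => ?_
          rw [lam_norm N hN k, lam_val N hN k]
          push_cast
          ring
      _ = ((N:ℤ) : ℂ) := h3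
      _ = ((N:ℝ) : ℂ) := by push_cast; rfl
  exact_mod_cast h4

/-- Bernstein inequality on the torus: if `b` is a trigonometric polynomial
of degree at most `N`, then `‖b'‖_∞ ≤ N ‖b‖_∞`. -/
theorem bernstein_torus (N : ℕ) (c : ℤ → ℂ) :
    ∀ x : ℝ,
      ‖deriv (fun t : ℝ => ∑ n ∈ Finset.Icc (-(N : ℤ)) (N : ℤ),
          c n * Complex.exp (Complex.I * n * t)) x‖ ≤
      (N : ℝ) * sSup (Set.range fun t : ℝ =>
        ‖∑ n ∈ Finset.Icc (-(N : ℤ)) (N : ℤ), c n * Complex.exp (Complex.I * n * t)‖) := by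
  intro x
  have hexp1 : ∀ (n : ℤ) (t : ℝ), ‖Complex.exp (Complex.I * n * t)‖ = 1 := by
    intro n t
    rw [Complex.norm_exp]
    have : (Complex.I * n * t).re = 0 := by simp
    rw [this, Real.exp_zero]
  have hbdd : BddAbove (Set.range fun t : ℝ =>
      ‖∑ n ∈ Finset.Icc (-(N : ℤ)) (N : ℤ), c n * Complex.exp (Complex.I * n * t)‖) := by
    refine ⟨∑ n ∈ Finset.Icc (-(N : ℤ)) (N : ℤ), ‖c n‖, ?_⟩
    rintro y ⟨t, rfl⟩
    refine le_trans (norm_sum_le _ _) (le_of_eq (Finset.sum_congr rfl fun n _ => ?_))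
    rw [norm_mul, hexp1, mul_one]
  set M := sSup (Set.range fun t : ℝ =>
      ‖∑ n ∈ Finset.Icc (-(N : ℤ)) (N : ℤ), c n * Complex.exp (Complex.I * n * t)‖) with hMdef
  have hM : ∀ t : ℝ, ‖∑ n ∈ Finset.Icc (-(N : ℤ)) (N : ℤ),
      c n * Complex.exp (Complex.I * n * t)‖ ≤ M :=
    fun t => le_csSup hbdd ⟨t, rfl⟩
  have hM0 : (0:ℝ) ≤ M := le_trans (norm_nonneg _) (hM 0)
  rcases Nat.eq_zero_or_pos N with hN0 | hN
  · subst hN0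
    have hconst : (fun t : ℝ => ∑ n ∈ Finset.Icc (-((0:ℕ) : ℤ)) ((0:ℕ) : ℤ),
        c n * Complex.exp (Complex.I * n * t)) = fun _ => c 0 := by
      funext t
      simp
    rw [hconst, deriv_const]
    simp [hM0]
  · have hderiv := (hd_sum N c x).deriv
    rw [hderiv]
    have hinterp : (∑ n ∈ Finset.Icc (-(N : ℤ)) (N : ℤ),
        c n * (Complex.I * n * Complex.exp (Complex.I * n * x)))
        = ∑ k ∈ Finset.range (2*N), lam N k * (∑ n ∈ Finset.Icc (-(N : ℤ)) (N : ℤ),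
            c n * Complex.exp (Complex.I * n * ((x + th N k : ℝ) : ℂ))) := by
      symm
      have h1 : ∀ k ∈ Finset.range (2*N),
          lam N k * (∑ n ∈ Finset.Icc (-(N : ℤ)) (N : ℤ),
            c n * Complex.exp (Complex.I * n * ((x + th N k : ℝ) : ℂ)))
          = ∑ n ∈ Finset.Icc (-(N : ℤ)) (N : ℤ),
              (c n * Complex.exp (Complex.I * n * x)) * (lam N k * Complex.exp (Complex.I * n * th N k)) := by
        intro k _
        rw [Finset.mul_sum]
        refine Finset.sum_congr rfl fun n _ => ?_
        have he : Complex.exp (Complex.I * n * ((x + th N k : ℝ) : ℂ))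
            = Complex.exp (Complex.I * n * x) * Complex.exp (Complex.I * n * (th N k : ℝ)) := by
          rw [← Complex.exp_add]
          congr 1
          push_cast
          ring
        rw [he]
        ring
      rw [Finset.sum_congr rfl h1, Finset.sum_comm]
      refine Finset.sum_congr rfl fun n hn => ?_
      rw [← Finset.mul_sum, dft N hN n (by simp only [Finset.mem_Icc] at hn; omega)]
      ring
    rw [hinterp]
    calc ‖∑ k ∈ Finset.range (2*N), lam N k * (∑ n ∈ Finset.Icc (-(N : ℤ)) (N : ℤ),
            c n * Complex.exp (Complex.I * n * ((x + th N k : ℝ) : ℂ)))‖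
        ≤ ∑ k ∈ Finset.range (2*N), ‖lam N k * (∑ n ∈ Finset.Icc (-(N : ℤ)) (N : ℤ),
            c n * Complex.exp (Complex.I * n * ((x + th N k : ℝ) : ℂ)))‖ := norm_sum_le _ _
      _ ≤ ∑ k ∈ Finset.range (2*N), ‖lam N k‖ * M := by
          refine Finset.sum_le_sum fun k _ => ?_
          rw [norm_mul]
          exact mul_le_mul_of_nonneg_left (hM (x + th N k)) (norm_nonneg _)
      _ = (N:ℝ) * M := by
          rw [← Finset.sum_mul, sum_norm N hN]
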